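/- Let N ≥ 3, let μ be a nonzero Radon measure on ℝ^N with support contained in the open half space ℝ^N_+ and finite Newtonian potential, let 0 < k ≤ 1, and let p > 0. Then for every λ > 0 the problem (1.1) has no positive solution. -/

import Mathlib

open MeasureTheory ENNReal Filter

noncomputable section

/-- The point `(y', t) ∈ ℝ^N` for `y' ∈ ℝ^{N-1}`, `t ∈ ℝ`. -/
def up (N : ℕ) (y' : EuclideanSpace ℝ (Fin (N - 1))) (t : ℝ) : EuclideanSpace ℝ (Fin N) :=
  (WithLp.equiv 2 (Fin N → ℝ)).symm fun i => if h : (i : ℕ) < N - 1 then y' ⟨i, h⟩ else t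

/-- The last coordinate `x_N` of `x ∈ ℝ^N`. -/
def ht (N : ℕ) (x : EuclideanSpace ℝ (Fin N)) : ℝ :=
  if h : N - 1 < N then x ⟨N - 1, h⟩ else 0

/-- Reflection `x̄ = (x', -x_N)` of `x = (x', x_N)` in the hyperplane `x_N = 0`. -/
def reflN (N : ℕ) (x : EuclideanSpace ℝ (Fin N)) : EuclideanSpace ℝ (Fin N) :=
  (WithLp.equiv 2 (Fin N → ℝ)).symm fun i => if (i : ℕ) < N - 1 then x i else -x i

/-- Surface area `σ_N` of the unit sphere in `ℝ^N` (equal to `N` times the unit ball volume). -/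
def sphereArea (N : ℕ) : ℝ :=
  N * (volume (Metric.ball (0 : EuclideanSpace ℝ (Fin N)) 1)).toReal

/-- The open upper half space `ℝ^N_+ = ℝ^{N-1} × (0,∞)`. -/
def upperHalf (N : ℕ) : Set (EuclideanSpace ℝ (Fin N)) := {x | 0 < ht N x}

/-- `H_u(x') = ∫_{ℝ^{N-1}} u(y',0)^p |x'-y'|^{-k} dy'`. -/
def Hu (N : ℕ) (p k : ℝ) (u : EuclideanSpace ℝ (Fin N) → ℝ)
    (x' : EuclideanSpace ℝ (Fin (N - 1))) : ℝ≥0∞ :=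
  ∫⁻ y', ENNReal.ofReal (u (up N y' 0)) ^ p * ENNReal.ofReal ‖x' - y'‖ ^ (-k)

/-- The Newtonian potential `U^ν(x) = (1/((N-2)σ_N)) ∫ |x-y|^{2-N} dν(y)`. -/
def NewtPot (N : ℕ) (ν : Measure (EuclideanSpace ℝ (Fin N)))
    (x : EuclideanSpace ℝ (Fin N)) : ℝ :=
  (((N : ℝ) - 2) * sphereArea N)⁻¹ * (∫⁻ y, ENNReal.ofReal ‖x - y‖ ^ ((2:ℝ) - N) ∂ν).toReal

/-- The Green potential `∫_{ℝ^N_+} G(x,y) dμ(y)` for the Neumann Green function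
`G(x,y) = (|x-y|^{2-N} + |x̄-y|^{2-N})/((N-2)σ_N)` of the half space. -/
def GreenPot (N : ℕ) (μ : Measure (EuclideanSpace ℝ (Fin N)))
    (x : EuclideanSpace ℝ (Fin N)) : ℝ :=
  (((N : ℝ) - 2) * sphereArea N)⁻¹ *
    (∫⁻ y, (ENNReal.ofReal ‖x - y‖ ^ ((2:ℝ) - N)
          + ENNReal.ofReal ‖reflN N x - y‖ ^ ((2:ℝ) - N)) ∂μ).toReal

/-- `μ` is a nonzero Radon (locally finite Borel) measure whose support is contained in the
open upper half space and whose Newtonian potential is finite everywhere. -/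
def AdmissibleMeasure (N : ℕ) (μ : Measure (EuclideanSpace ℝ (Fin N))) : Prop :=
  μ ≠ 0 ∧ IsLocallyFiniteMeasure μ ∧
    (∃ F : Set (EuclideanSpace ℝ (Fin N)), IsClosed F ∧ F ⊆ upperHalf N ∧ μ Fᶜ = 0) ∧
    (∀ x, (∫⁻ y, ENNReal.ofReal ‖x - y‖ ^ ((2:ℝ) - N) ∂μ) < ⊤)

/-- A measurable function `u` is a positive solution of problem (1.1):
(i) `u > 0` a.e. in `ℝ^N_+`, and for a.e. `x' ∈ ℝ^{N-1}`, `u(z) → u(x',0)` as `z → (x',0)`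
with `z ∈ ℝ^N_+`;
(ii) `H_u < ∞` a.e. in `ℝ^{N-1}`, and `∫_{ℝ^{N-1}} H_u(y')|x-(y',0)|^{2-N} dy' < ∞` for
a.e. `x ∈ ℝ^N_+`;
(iii) `u(x) = ∫_{ℝ^N_+} G(x,y) dμ(y)
　　　　+ (2λ/((N-2)σ_N)) ∫∫ u(z',0)^p |x-(y',0)|^{2-N} |y'-z'|^{-k} dz' dy'`
for a.e. `x ∈ ℝ^N_+`. -/
def IsPosSolution (N : ℕ) (p lam k : ℝ) (μ : Measure (EuclideanSpace ℝ (Fin N)))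
    (u : EuclideanSpace ℝ (Fin N) → ℝ) : Prop :=
  Measurable u ∧
  (∀ᵐ x ∂(volume.restrict (upperHalf N)), 0 < u x) ∧
  (∀ᵐ x' ∂(volume : Measure (EuclideanSpace ℝ (Fin (N - 1)))),
    Tendsto u (nhdsWithin (up N x' 0) (upperHalf N)) (nhds (u (up N x' 0)))) ∧
  (∀ᵐ x' ∂(volume : Measure (EuclideanSpace ℝ (Fin (N - 1)))), Hu N p k u x' < ⊤) ∧
  (∀ᵐ x ∂(volume.restrict (upperHalf N)),
    (∫⁻ y', Hu N p k u y' * ENNReal.ofReal ‖x - up N y' 0‖ ^ ((2:ℝ) - N)) < ⊤) ∧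
  (∀ᵐ x ∂(volume.restrict (upperHalf N)),
    ENNReal.ofReal (u x) =
      ENNReal.ofReal (((N : ℝ) - 2) * sphereArea N)⁻¹ *
        (∫⁻ y, (ENNReal.ofReal ‖x - y‖ ^ ((2:ℝ) - N)
              + ENNReal.ofReal ‖reflN N x - y‖ ^ ((2:ℝ) - N)) ∂μ) +
      ENNReal.ofReal (2 * lam / (((N : ℝ) - 2) * sphereArea N)) *
        ∫⁻ y', ENNReal.ofReal ‖x - up N y' 0‖ ^ ((2:ℝ) - N) * Hu N p k u y')

/-- A measurable function `u` is a positive solution of problem (1.1) with `μ ≡ 0`: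
conditions (i), (ii) as above and
(iii) `u(x) = (2λ/((N-2)σ_N)) ∫∫ u(z',0)^p |x-(y',0)|^{2-N} |y'-z'|^{-k} dz' dy'`
for a.e. `x ∈ ℝ^N_+`. -/
def IsPosSolution0 (N : ℕ) (p lam k : ℝ) (u : EuclideanSpace ℝ (Fin N) → ℝ) : Prop :=
  Measurable u ∧
  (∀ᵐ x ∂(volume.restrict (upperHalf N)), 0 < u x) ∧
  (∀ᵐ x' ∂(volume : Measure (EuclideanSpace ℝ (Fin (N - 1)))),
    Tendsto u (nhdsWithin (up N x' 0) (upperHalf N)) (nhds (u (up N x' 0)))) ∧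
  (∀ᵐ x' ∂(volume : Measure (EuclideanSpace ℝ (Fin (N - 1)))), Hu N p k u x' < ⊤) ∧
  (∀ᵐ x ∂(volume.restrict (upperHalf N)),
    (∫⁻ y', Hu N p k u y' * ENNReal.ofReal ‖x - up N y' 0‖ ^ ((2:ℝ) - N)) < ⊤) ∧
  (∀ᵐ x ∂(volume.restrict (upperHalf N)),
    ENNReal.ofReal (u x) =
      ENNReal.ofReal (2 * lam / (((N : ℝ) - 2) * sphereArea N)) *
        ∫⁻ y', ENNReal.ofReal ‖x - up N y' 0‖ ^ ((2:ℝ) - N) * Hu N p k u y')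

/-- The boundary trace `x' ↦ u(x',0)` belongs to `L^q_loc(ℝ^{N-1})`. -/
def BdryLocLp (N : ℕ) (q : ℝ) (u : EuclideanSpace ℝ (Fin N) → ℝ) : Prop :=
  ∀ K : Set (EuclideanSpace ℝ (Fin (N - 1))), IsCompact K →
    MemLp (fun x' => u (up N x' 0)) (ENNReal.ofReal q) (volume.restrict K)


-- antitone rpow
lemma myOfReal_rpow_anti {a b : ℝ} (ha : 0 ≤ a) (hab : a ≤ b) {e : ℝ} (he : 0 < e) :
    ENNReal.ofReal b ^ (-e) ≤ ENNReal.ofReal a ^ (-e) := by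
  rw [ENNReal.rpow_neg, ENNReal.rpow_neg]
  exact ENNReal.inv_le_inv.mpr (ENNReal.rpow_le_rpow (ENNReal.ofReal_le_ofReal hab) he.le)

lemma up_apply (N : ℕ) (y' : EuclideanSpace ℝ (Fin (N - 1))) (t : ℝ) (i : Fin N) :
    up N y' t i = if h : (i : ℕ) < N - 1 then y' ⟨i, h⟩ else t := by
  simp [up, WithLp.equiv_symm_apply, PiLp.toLp_apply]

lemma ht_up (N : ℕ) (hN : 1 ≤ N) (y' : EuclideanSpace ℝ (Fin (N - 1))) (t : ℝ) :
    ht N (up N y' t) = t := by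
  rw [ht, dif_pos (by omega : N - 1 < N), up_apply, dif_neg (by simp)]

lemma norm_up (N : ℕ) (hN : 1 ≤ N) (y' : EuclideanSpace ℝ (Fin (N - 1))) (t : ℝ) :
    ‖up N y' t‖ = Real.sqrt (‖y'‖ ^ 2 + t ^ 2) := by
  have hc : N - 1 + 1 = N := by omega
  have hsum : ∑ i : Fin N, ‖up N y' t i‖ ^ 2 = (∑ j : Fin (N - 1), ‖y' j‖ ^ 2) + t ^ 2 := by
    rw [← Fintype.sum_equiv (finCongr hc) (fun i => ‖up N y' t (finCongr hc i)‖ ^ 2)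
        (fun i => ‖up N y' t i‖ ^ 2) (fun i => rfl), Fin.sum_univ_castSucc]
    congr 1
    · refine Finset.sum_congr rfl fun j _ => ?_
      have h1 : ((finCongr hc j.castSucc : Fin N) : ℕ) < N - 1 := by
        simpa using j.isLt
      rw [up_apply, dif_pos h1]
      congr 1
    · rw [up_apply, dif_neg (by simp)]
      simp [Real.norm_eq_abs, sq_abs]
  rw [EuclideanSpace.norm_eq, hsum, EuclideanSpace.norm_eq y',
    Real.sq_sqrt (by positivity)]

lemma norm_up_zero (N : ℕ) (hN : 1 ≤ N) (y' : EuclideanSpace ℝ (Fin (N - 1))) :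
    ‖up N y' 0‖ = ‖y'‖ := by
  rw [norm_up N hN]
  simp [Real.sqrt_sq_eq_abs]

lemma up_sub_up (N : ℕ) (y' : EuclideanSpace ℝ (Fin (N - 1))) (t s : ℝ) :
    up N y' t - up N y' s = up N 0 (t - s) := by
  ext i
  simp only [PiLp.sub_apply, up_apply]
  split_ifs <;> simp

lemma dist_up (N : ℕ) (hN : 1 ≤ N) (y' : EuclideanSpace ℝ (Fin (N - 1))) (t s : ℝ) :
    dist (up N y' t) (up N y' s) = |t - s| := by
  rw [dist_eq_norm, up_sub_up, norm_up N hN]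
  simp [Real.sqrt_sq_eq_abs]

lemma myMeasurable_up (N : ℕ) (t : ℝ) :
    Measurable fun y' : EuclideanSpace ℝ (Fin (N - 1)) => up N y' t := by
  apply Continuous.measurable
  simp only [up, WithLp.equiv_symm_apply]
  refine (PiLp.continuous_toLp 2 _).comp (continuous_pi fun i => ?_)
  split_ifs with h
  · exact (continuous_apply _).comp (PiLp.continuous_ofLp 2 _)
  · exact continuous_const

lemma continuous_ht (N : ℕ) : Continuous (ht N) := by
  unfold ht
  split_ifs with h
  · exact (continuous_apply (⟨N - 1, h⟩ : Fin N)).comp (PiLp.continuous_ofLp 2 _)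
  · exact continuous_const

lemma isOpen_upperHalf' (N : ℕ) : IsOpen {x : EuclideanSpace ℝ (Fin N) | 0 < ht N x} :=
  isOpen_Ioi.preimage (continuous_ht N)

lemma myLintegral_eq_top (d : ℕ) (hd : 1 ≤ d) (M : ℝ) (hM : 1 ≤ M) :
    ∫⁻ y : EuclideanSpace ℝ (Fin d), ENNReal.ofReal (M * (1 + ‖y‖)) ^ (-(d : ℝ)) = ⊤ := by
  set E := EuclideanSpace ℝ (Fin d)
  haveI : Nontrivial E :=
    nontrivial_of_ne (EuclideanSpace.single (⟨0, hd⟩ : Fin d) (1:ℝ)) 0 (by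
      intro h
      have h1 : EuclideanSpace.single (⟨0, hd⟩ : Fin d) (1:ℝ) ⟨0, hd⟩ = 1 := by
        simp [EuclideanSpace.single_apply]
      rw [h] at h1
      change (0:ℝ) = 1 at h1
      norm_num at h1)
  set v := volume (Metric.ball (0 : E) 1) with hv
  have hv0 : v ≠ 0 := (Metric.measure_ball_pos _ _ one_pos).ne'
  have hvt : v ≠ ⊤ := measure_ball_lt_top.ne
  set A : ℕ → Set E := fun n => Metric.ball 0 (2 ^ (n + 1)) \ Metric.ball 0 (2 ^ n) with hA
  have hAm : ∀ n, MeasurableSet (A n) := fun n =>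
    measurableSet_ball.diff measurableSet_ball
  have hAd : Pairwise (Function.onFun Disjoint A) := by
    rw [pairwise_disjoint_on]
    intro m n hmn
    refine Set.disjoint_left.mpr fun x hxm hxn => ?_
    have h1 : x ∈ Metric.ball (0 : E) (2 ^ (m + 1)) := hxm.1
    have h2 : x ∉ Metric.ball (0 : E) (2 ^ n) := hxn.2
    exact h2 (Metric.ball_subset_ball (by
      have : (2:ℝ) ^ (m+1) ≤ 2 ^ n := pow_le_pow_right₀ one_le_two hmn
      exact this) h1)
  have hball : ∀ n : ℕ, volume (Metric.ball (0 : E) ((2:ℝ) ^ n)) =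
      ENNReal.ofReal (((2:ℝ) ^ n) ^ d) * v := by
    intro n
    rw [Measure.addHaar_ball volume 0 (by positivity), finrank_euclideanSpace_fin]
  have hAvol : ∀ n, volume (A n) =
      ENNReal.ofReal (((2:ℝ) ^ (n+1)) ^ d - ((2:ℝ) ^ n) ^ d) * v := by
    intro n
    rw [hA]
    rw [measure_diff (Metric.ball_subset_ball (by
        exact pow_le_pow_right₀ one_le_two (Nat.le_succ n)))
      measurableSet_ball.nullMeasurableSet measure_ball_lt_top.ne,
      hball, hball, ← ENNReal.sub_mul (fun _ _ => hvt),
      ← ENNReal.ofReal_sub _ (by positivity)]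
  set δ : ℝ≥0∞ := ENNReal.ofReal ((M ^ d)⁻¹ * ((2:ℝ) ^ (2 * d))⁻¹ * ((2:ℝ) ^ d - 1)) * v with hδ
  have hδ0 : δ ≠ 0 := by
    apply mul_ne_zero _ hv0
    have h1 : (1:ℝ) < 2 ^ d := by
      simpa using pow_lt_pow_right₀ (one_lt_two : (1:ℝ) < 2) (show 0 < d by omega)
    have hM0 : (0:ℝ) < M := by linarith
    refine (ENNReal.ofReal_pos.mpr ?_).ne'
    have : (0:ℝ) < (M ^ d)⁻¹ * ((2:ℝ) ^ (2 * d))⁻¹ := by positivity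
    nlinarith
  have hlow : ∀ n, δ ≤ ∫⁻ y in A n, ENNReal.ofReal (M * (1 + ‖y‖)) ^ (-(d : ℝ)) := by
    intro n
    have hconst : ∀ y ∈ A n, ENNReal.ofReal (M * 2 ^ (n + 2)) ^ (-(d:ℝ)) ≤
        ENNReal.ofReal (M * (1 + ‖y‖)) ^ (-(d : ℝ)) := by
      intro y hy
      have hy1 : ‖y‖ < 2 ^ (n + 1) := by
        have := hy.1
        rwa [Metric.mem_ball, dist_zero_right] at this
      have hub : M * (1 + ‖y‖) ≤ M * 2 ^ (n + 2) := by
        have h1 : (1:ℝ) + ‖y‖ ≤ 2 ^ (n + 2) := by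
          have : (1:ℝ) ≤ 2 ^ (n+1) := one_le_pow₀ one_le_two
          have h2 : (2:ℝ) ^ (n+2) = 2 ^ (n+1) + 2 ^ (n+1) := by ring
          nlinarith [norm_nonneg y]
        have hM0 : (0:ℝ) ≤ M := by linarith
        nlinarith [norm_nonneg y]
      exact myOfReal_rpow_anti (by positivity) hub (by positivity)
    calc δ ≤ ENNReal.ofReal (M * 2 ^ (n + 2)) ^ (-(d:ℝ)) * volume (A n) := by
          rw [hAvol n, hδ]
          rw [ENNReal.ofReal_rpow_of_pos (by positivity)]
          rw [← mul_assoc, ← ENNReal.ofReal_mul (by positivity)]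
          apply mul_le_mul_left (ENNReal.ofReal_le_ofReal _)
          apply le_of_eq
          have e1 : (M * 2 ^ (n + 2)) ^ (-(d:ℝ)) = ((M * 2 ^ (n+2)) ^ d)⁻¹ := by
            rw [← Real.rpow_natCast (M * 2 ^ (n+2)) d, ← Real.rpow_neg (by positivity)]
          have e2 : ((2:ℝ) ^ (n+1)) ^ d - ((2:ℝ) ^ n) ^ d = 2 ^ (n*d) * (2 ^ d - 1) := by
            rw [← pow_mul, ← pow_mul, mul_sub, ← pow_add]
            ring_nf
          have e3 : (M * 2 ^ (n + 2)) ^ d = M ^ d * ((2:ℝ) ^ (n*d) * 2 ^ (2*d)) := by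
            rw [mul_pow, ← pow_mul, ← pow_add]
            ring_nf
          rw [e1, e2, e3]
          have hM0 : (0:ℝ) < M := by linarith
          have h2 : (0:ℝ) < (2:ℝ) ^ (n*d) := by positivity
          field_simp
      _ ≤ ∫⁻ y in A n, ENNReal.ofReal (M * (1 + ‖y‖)) ^ (-(d : ℝ)) := by
          rw [← setLIntegral_const (A n) _]
          exact setLIntegral_mono' (hAm n) hconst
  refine top_le_iff.mp ?_
  calc (⊤ : ℝ≥0∞) = ∑' _ : ℕ, δ := (ENNReal.tsum_const_eq_top_of_ne_zero hδ0).symm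
    _ ≤ ∑' n : ℕ, ∫⁻ y in A n, ENNReal.ofReal (M * (1 + ‖y‖)) ^ (-(d : ℝ)) :=
        ENNReal.tsum_le_tsum hlow
    _ = ∫⁻ y in ⋃ n, A n, ENNReal.ofReal (M * (1 + ‖y‖)) ^ (-(d : ℝ)) :=
        (lintegral_iUnion hAm hAd _).symm
    _ ≤ _ := setLIntegral_le_lintegral _ _

lemma myExists_of_ae {α : Type*} [MeasurableSpace α] {ν : MeasureTheory.Measure α}
    {P : α → Prop} (h : ∀ᵐ x ∂ν, P x) {s : Set α} (hs : ν s ≠ 0) : ∃ x ∈ s, P x := by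
  by_contra hc
  push_neg at hc
  exact hs (measure_mono_null (fun x hx => hc x hx) (MeasureTheory.ae_iff.1 h))


/-- Theorem 1.1(i1): if `0 < k ≤ 1` and `p > 0` then, for every `λ > 0`, problem (1.1)
with a nonzero admissible measure `μ` has no positive solution. -/
theorem no_solution_mu_ne_zero_k_le_one
    (N : ℕ) (hN : 3 ≤ N)
    (μ : Measure (EuclideanSpace ℝ (Fin N))) (hμ : AdmissibleMeasure N μ)
    (k p lam : ℝ) (hk0 : 0 < k) (hk1 : k ≤ 1) (hp : 0 < p) (hlam : 0 < lam) :
    ¬ ∃ u : EuclideanSpace ℝ (Fin N) → ℝ, IsPosSolution N p lam k μ u := by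
  rintro ⟨u, hmeas, hupos, htend, hHfin, hIfin, heq⟩
  obtain ⟨hμ0, hμloc, ⟨F, hFcl, hFsub, hFc⟩, hμpot⟩ := hμ
  have hN3 : (3:ℝ) ≤ (N:ℝ) := by exact_mod_cast hN
  have hN1 : 1 ≤ N := by omega
  set C : ℝ := ((N : ℝ) - 2) * sphereArea N with hCdef
  have hσ : 0 < sphereArea N := by
    have h1 : (0:ℝ≥0∞) < volume (Metric.ball (0 : EuclideanSpace ℝ (Fin N)) 1) :=
      Metric.measure_ball_pos _ _ one_pos
    have h2 : volume (Metric.ball (0 : EuclideanSpace ℝ (Fin N)) 1) ≠ ⊤ := measure_ball_lt_top.ne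
    have h3 := ENNReal.toReal_pos h1.ne' h2
    have h4 : (0:ℝ) < (N:ℝ) := by linarith
    exact mul_pos h4 h3
  have hC : 0 < C := mul_pos (by linarith) hσ
  have hopen : IsOpen (upperHalf N) := isOpen_upperHalf' N
  have hms : MeasurableSet (upperHalf N) := hopen.measurableSet
  have hup_mem : ∀ (x' : (EuclideanSpace ℝ (Fin (N - 1)))) (t : ℝ), 0 < t → up N x' t ∈ upperHalf N := by
    intro x' t ht'
    show 0 < ht N (up N x' t)
    rwa [ht_up N hN1]
  have hball_ne : ∀ (x' : (EuclideanSpace ℝ (Fin (N - 1)))) (r : ℝ), 0 < r →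
      volume.restrict (upperHalf N) (Metric.ball (up N x' 0) r) ≠ 0 := by
    intro x' r hr
    rw [Measure.restrict_apply measurableSet_ball]
    refine ((Metric.isOpen_ball.inter hopen).measure_pos volume ⟨up N x' (r/2), ?_, ?_⟩).ne'
    · rw [Metric.mem_ball, dist_up N hN1]
      rw [sub_zero, abs_of_pos (by linarith)]
      linarith
    · exact hup_mem x' (r/2) (by linarith)
  -- the pointwise inequality from the equation
  set g : (EuclideanSpace ℝ (Fin N)) → (EuclideanSpace ℝ (Fin N)) → ℝ≥0∞ :=
    fun x y => ENNReal.ofReal C⁻¹ * ENNReal.ofReal ‖x - y‖ ^ ((2:ℝ) - N) with hg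
  have hglb : ∀ x : EuclideanSpace ℝ (Fin N),
      (ENNReal.ofReal (u x) =
        ENNReal.ofReal (((N : ℝ) - 2) * sphereArea N)⁻¹ *
          (∫⁻ y, (ENNReal.ofReal ‖x - y‖ ^ ((2:ℝ) - N)
                + ENNReal.ofReal ‖reflN N x - y‖ ^ ((2:ℝ) - N)) ∂μ) +
        ENNReal.ofReal (2 * lam / (((N : ℝ) - 2) * sphereArea N)) *
          ∫⁻ y', ENNReal.ofReal ‖x - up N y' 0‖ ^ ((2:ℝ) - N) * Hu N p k u y') →
      ∫⁻ y, g x y ∂μ ≤ ENNReal.ofReal (u x) := by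
    intro x hx
    rw [hx, hg]
    rw [lintegral_const_mul' _ _ ENNReal.ofReal_ne_top]
    refine le_add_right (mul_le_mul_right (lintegral_mono fun y => le_self_add) _)
  -- Step 1: trace positivity
  have htrace : ∀ᵐ x' ∂(volume : Measure (EuclideanSpace ℝ (Fin (N - 1)))), 0 < u (up N x' 0) := by
    filter_upwards [htend] with x' hx'
    set x₀ := up N x' 0 with hx₀
    have hP := (ae_restrict_mem hms).and heq
    have hchoose : ∀ n : ℕ, ∃ zz, zz ∈ Metric.ball x₀ (1/(n+1)) ∧
        (zz ∈ upperHalf N ∧ _) :=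
      fun n => myExists_of_ae hP (hball_ne x' (1/(n+1)) (by positivity))
    choose z hz1 hz2 using hchoose
    have htends : Tendsto z atTop (nhds x₀) := by
      rw [tendsto_iff_dist_tendsto_zero]
      refine squeeze_zero (fun n => dist_nonneg) (fun n => (hz1 n).le) ?_
      exact tendsto_one_div_add_atTop_nhds_zero_nat
    have hzup : Tendsto z atTop (nhdsWithin x₀ (upperHalf N)) :=
      tendsto_nhdsWithin_iff.mpr ⟨htends, Eventually.of_forall fun n => (hz2 n).1⟩
    have hofReal : Tendsto (fun n => ENNReal.ofReal (u (z n))) atTop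
        (nhds (ENNReal.ofReal (u x₀))) :=
      (ENNReal.continuous_ofReal.tendsto _).comp (hx'.comp hzup)
    have hgm : ∀ w : EuclideanSpace ℝ (Fin N), Measurable (g w) := by
      intro w
      exact measurable_const.mul ((ENNReal.continuous_rpow_const.comp
        (ENNReal.continuous_ofReal.comp ((continuous_const.sub continuous_id).norm))).measurable)
    have hgcont : ∀ y : EuclideanSpace ℝ (Fin N), Continuous fun w : (EuclideanSpace ℝ (Fin N)) => g w y := by
      intro y
      exact (ENNReal.continuous_const_mul ENNReal.ofReal_ne_top).comp
        (ENNReal.continuous_rpow_const.comp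
          (ENNReal.continuous_ofReal.comp ((continuous_id.sub continuous_const).norm)))
    have hfatou : ∫⁻ y, g x₀ y ∂μ ≤ liminf (fun n => ∫⁻ y, g (z n) y ∂μ) atTop := by
      refine le_trans (le_of_eq ?_) (lintegral_liminf_le (fun n => hgm (z n)))
      refine lintegral_congr fun y => ?_
      exact (Tendsto.liminf_eq (((hgcont y).tendsto x₀).comp htends)).symm
    have hchain : ∫⁻ y, g x₀ y ∂μ ≤ ENNReal.ofReal (u x₀) := by
      refine hfatou.trans ?_
      rw [← hofReal.liminf_eq]
      exact liminf_le_liminf (Eventually.of_forall fun n => hglb (z n) (hz2 n).2)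
    have hpos : 0 < ∫⁻ y, g x₀ y ∂μ := by
      rw [lintegral_pos_iff_support (hgm x₀)]
      have hsupp : Function.support (g x₀) = Set.univ := by
        refine Set.eq_univ_of_forall fun y => ?_
        refine mul_ne_zero (ENNReal.ofReal_pos.mpr (inv_pos.mpr hC)).ne' ?_
        rw [Ne, ENNReal.rpow_eq_zero_iff]
        rintro (⟨h0, hpos'⟩ | ⟨htop, -⟩)
        · linarith
        · exact ENNReal.ofReal_ne_top htop
      rw [hsupp]
      exact Measure.measure_univ_pos.mpr hμ0
    exact ENNReal.ofReal_pos.mp (lt_of_lt_of_le hpos hchain)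
  -- Step 2: pick a point with finite iterated potential
  have hup_vol : volume.restrict (upperHalf N) Set.univ ≠ 0 := by
    rw [Measure.restrict_apply_univ]
    refine (hopen.measure_pos volume ⟨up N 0 1, hup_mem 0 1 one_pos⟩).ne'
  obtain ⟨xs, -, hxsup, hxsI⟩ :
      ∃ x ∈ Set.univ, x ∈ upperHalf N ∧
        (∫⁻ y', Hu N p k u y' * ENNReal.ofReal ‖x - up N y' 0‖ ^ ((2:ℝ) - N)) < ⊤ :=
    myExists_of_ae ((ae_restrict_mem hms).and hIfin) hup_vol
  -- Step 3: show that integral is infinite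
  set f : (EuclideanSpace ℝ (Fin (N - 1))) → ℝ≥0∞ := fun z' => ENNReal.ofReal (u (up N z' 0)) ^ p with hf
  set ker : (EuclideanSpace ℝ (Fin (N - 1))) → (EuclideanSpace ℝ (Fin (N - 1))) → ℝ≥0∞ := fun y' z' => ENNReal.ofReal ‖y' - z'‖ ^ (-k) with hker
  set B : (EuclideanSpace ℝ (Fin (N - 1))) → ℝ≥0∞ := fun y' => ENNReal.ofReal ‖xs - up N y' 0‖ ^ ((2:ℝ) - N) with hB
  have hnorm_pos : ∀ y' : (EuclideanSpace ℝ (Fin (N - 1))), 0 < ‖xs - up N y' 0‖ := by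
    intro y'
    rw [norm_pos_iff, sub_ne_zero]
    intro hxe
    have h1 : 0 < ht N xs := hxsup
    rw [hxe, ht_up N hN1] at h1
    exact lt_irrefl 0 h1
  have hBne : ∀ y', B y' ≠ ⊤ := by
    intro y'
    rw [hB, Ne, ENNReal.rpow_eq_top_iff]
    rintro (⟨h0, -⟩ | ⟨htop, -⟩)
    · exact (ENNReal.ofReal_pos.mpr (hnorm_pos y')).ne' h0
    · exact ENNReal.ofReal_ne_top htop
  have hfne : ∀ z', f z' ≠ ⊤ := by
    intro z'
    rw [hf, Ne, ENNReal.rpow_eq_top_iff]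
    rintro (⟨-, hneg⟩ | ⟨htop, -⟩)
    · linarith
    · exact ENNReal.ofReal_ne_top htop
  have hfpos : ∀ᵐ z' ∂(volume : Measure (EuclideanSpace ℝ (Fin (N - 1)))), f z' ≠ 0 := by
    filter_upwards [htrace] with z' hz'
    rw [hf, Ne, ENNReal.rpow_eq_zero_iff]
    rintro (⟨h0, -⟩ | ⟨htop, -⟩)
    · exact (ENNReal.ofReal_pos.mpr hz').ne' h0
    · exact ENNReal.ofReal_ne_top htop
  have hK : ∀ z' : (EuclideanSpace ℝ (Fin (N - 1))), (∫⁻ y', ker y' z' * B y') = ⊤ := by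
    intro z'
    set M : ℝ := ‖z'‖ + ‖xs‖ + 1 with hM
    have hM1 : 1 ≤ M := by
      have := norm_nonneg z'; have := norm_nonneg xs; rw [hM]; linarith
    have hMy : ∀ y' : (EuclideanSpace ℝ (Fin (N - 1))), (1:ℝ) ≤ M * (1 + ‖y'‖) := by
      intro y'
      have h1 := norm_nonneg y'
      nlinarith
    have hbound : ∀ y' : (EuclideanSpace ℝ (Fin (N - 1))),
        ENNReal.ofReal (M * (1 + ‖y'‖)) ^ (-((N:ℝ) - 1)) ≤ ker y' z' * B y' := by
      intro y'
      have h1 : ‖y' - z'‖ ≤ M * (1 + ‖y'‖) := by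
        have h2 := norm_sub_le y' z'
        have h3 := norm_nonneg y'
        have h4 := norm_nonneg z'
        have h5 := norm_nonneg xs
        nlinarith
      have h6 : ‖xs - up N y' 0‖ ≤ M * (1 + ‖y'‖) := by
        have h7 := norm_sub_le xs (up N y' 0)
        rw [norm_up_zero N (by omega)] at h7
        have h3 := norm_nonneg y'
        have h4 := norm_nonneg z'
        have h5 := norm_nonneg xs
        nlinarith
      have hk' : ker y' z' ≥ ENNReal.ofReal (M * (1 + ‖y'‖)) ^ (-k) :=
        myOfReal_rpow_anti (norm_nonneg _) h1 hk0
      have hB' : B y' ≥ ENNReal.ofReal (M * (1 + ‖y'‖)) ^ (-((N:ℝ) - 2)) := by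
        rw [hB, show (2:ℝ) - (N:ℝ) = -((N:ℝ) - 2) by ring]
        exact myOfReal_rpow_anti (norm_nonneg _) h6 (by linarith)
      calc ENNReal.ofReal (M * (1 + ‖y'‖)) ^ (-((N:ℝ) - 1))
          ≤ ENNReal.ofReal (M * (1 + ‖y'‖)) ^ (-k + -((N:ℝ) - 2)) := by
            refine ENNReal.rpow_le_rpow_of_exponent_le ?_ (by linarith)
            exact ENNReal.one_le_ofReal.mpr (hMy y')
        _ = ENNReal.ofReal (M * (1 + ‖y'‖)) ^ (-k) *
              ENNReal.ofReal (M * (1 + ‖y'‖)) ^ (-((N:ℝ) - 2)) := by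
            refine ENNReal.rpow_add _ _ ?_ ENNReal.ofReal_ne_top
            exact (ENNReal.ofReal_pos.mpr (by linarith [hMy y'])).ne'
        _ ≤ ker y' z' * B y' := mul_le_mul' hk' hB'
    have hcast : (((N - 1 : ℕ)) : ℝ) = (N:ℝ) - 1 := by
      have : (1:ℕ) ≤ N := hN1
      push_cast [this]
      ring
    refine top_le_iff.mp ?_
    calc (⊤ : ℝ≥0∞)
        = ∫⁻ y' : (EuclideanSpace ℝ (Fin (N - 1))), ENNReal.ofReal (M * (1 + ‖y'‖)) ^ (-(((N - 1 : ℕ)) : ℝ)) :=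
          (myLintegral_eq_top (N - 1) (by omega) M hM1).symm
      _ = ∫⁻ y' : (EuclideanSpace ℝ (Fin (N - 1))), ENNReal.ofReal (M * (1 + ‖y'‖)) ^ (-((N:ℝ) - 1)) := by
          rw [hcast]
      _ ≤ ∫⁻ y', ker y' z' * B y' := lintegral_mono hbound
  -- put it together
  have hmf : Measurable f :=
    ENNReal.continuous_rpow_const.measurable.comp
      (ENNReal.measurable_ofReal.comp (hmeas.comp (myMeasurable_up N 0)))
  have hmB : Measurable B :=
    ENNReal.continuous_rpow_const.measurable.comp
      (ENNReal.measurable_ofReal.comp ((measurable_const.sub (myMeasurable_up N 0)).norm))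
  have hmF : Measurable (Function.uncurry fun y' z' : (EuclideanSpace ℝ (Fin (N - 1))) => f z' * ker y' z' * B y') := by
    apply Measurable.mul
    apply Measurable.mul
    · exact hmf.comp measurable_snd
    · exact (ENNReal.continuous_rpow_const.comp
        (ENNReal.continuous_ofReal.comp ((continuous_fst.sub continuous_snd).norm))).measurable
    · exact hmB.comp measurable_fst
  have hItop : (∫⁻ y', Hu N p k u y' * ENNReal.ofReal ‖xs - up N y' 0‖ ^ ((2:ℝ) - N)) = ⊤ := by
    have step1 : (∫⁻ y', Hu N p k u y' * ENNReal.ofReal ‖xs - up N y' 0‖ ^ ((2:ℝ) - N))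
        = ∫⁻ y', ∫⁻ z', f z' * ker y' z' * B y' := by
      refine lintegral_congr fun y' => ?_
      exact (lintegral_mul_const' _ _ (hBne y')).symm
    have step2 : (∫⁻ (y' : (EuclideanSpace ℝ (Fin (N - 1)))), ∫⁻ (z' : (EuclideanSpace ℝ (Fin (N - 1)))), f z' * ker y' z' * B y')
        = ∫⁻ z', ∫⁻ y', f z' * ker y' z' * B y' :=
      lintegral_lintegral_swap hmF.aemeasurable
    rw [step1, step2]
    have step3 : ∀ z' : (EuclideanSpace ℝ (Fin (N - 1))), (∫⁻ y', f z' * ker y' z' * B y')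
        = f z' * ∫⁻ y', ker y' z' * B y' := by
      intro z'
      simp_rw [mul_assoc]
      exact lintegral_const_mul' _ _ (hfne z')
    have hae : ∀ᵐ z' ∂(volume : Measure (EuclideanSpace ℝ (Fin (N - 1)))),
        (∫⁻ y', f z' * ker y' z' * B y') = ⊤ := by
      filter_upwards [hfpos] with z' hz'
      rw [step3 z', hK z', ENNReal.mul_top hz']
    rw [lintegral_congr_ae hae, lintegral_const]
    rw [ENNReal.top_mul]
    refine (isOpen_univ.measure_pos volume ?_).ne'
    exact Set.univ_nonempty
  exact absurd hxsI (by rw [hItop]; exact lt_irrefl ⊤)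

end
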